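/- arXiv:1509.03380 — 2 statements merged into one kernel-verified Lean document; each statement's English description precedes it below -/
import Mathlib

section
/- For every divisor C on G and every divisor D on H, the divisor β(C,D) is a Cartier divisor on the triangulated product Δ. -/
open scoped Classical
open Finset

section TriangulatedProduct

variable {VG VH : Type*}

/-- The column of the Laplacian matrix of `G` indexed by the vertex `w`:
its entry at `v` is `-deg v` if `v = w`, `1` if `v` is adjacent to `w`, and `0` otherwise. -/
noncomputable def lapCol (G : SimpleGraph VG) [Fintype VG] (w v : VG) : ℤ :=
  if v = w then -(((Finset.univ.filter (fun u => G.Adj v u)).card : ℤ))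
  else if G.Adj v w then 1 else 0

/-- A divisor on a finite graph is principal if it lies in the ℤ-span of the
columns of the Laplacian matrix of the graph. -/
def GraphPrincipal (G : SimpleGraph VG) [Fintype VG] (D : VG → ℤ) : Prop :=
  ∃ f : VG → ℤ, ∀ v, D v = ∑ w, f w * lapCol G w v

/-- A triangulated product of the graphs `G` and `H`: for each square
(an edge `aa'` of `G` together with an edge `bb'` of `H`) exactly one of the two
possible diagonals `{(a,b),(a',b')}`, `{(a,b'),(a',b)}` is chosen.  The structure
records the resulting symmetric "diagonal edge" relation. -/
structure TriProd (G : SimpleGraph VG) (H : SimpleGraph VH) where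
  diag : VG × VH → VG × VH → Prop
  diag_symm : ∀ u v, diag u v → diag v u
  diag_adj : ∀ a a' b b', diag (a, b) (a', b') → G.Adj a a' ∧ H.Adj b b'
  diag_choice : ∀ a a' b b', G.Adj a a' → H.Adj b b' →
    (diag (a, b) (a', b') ∧ ¬ diag (a, b') (a', b)) ∨
    (¬ diag (a, b) (a', b') ∧ diag (a, b') (a', b))

namespace TriProd

variable {G : SimpleGraph VG} {H : SimpleGraph VH}

/-- `u` and `v` form an edge of the triangulated product: a horizontal edge,
a vertical edge, or a diagonal edge. -/
def Adj (T : TriProd G H) (u v : VG × VH) : Prop :=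
  (u.2 = v.2 ∧ G.Adj u.1 v.1) ∨ (u.1 = v.1 ∧ H.Adj u.2 v.2) ∨ T.diag u v

/-- `{u, v, w}` is a triangle (2-face) of the triangulated product. -/
def IsFace (T : TriProd G H) (u v w : VG × VH) : Prop :=
  ∃ a a' b b', T.diag (a, b) (a', b') ∧
    ({u, v, w} : Finset (VG × VH)) = {(a, b), (a', b'), (a', b)}

/-- `{u, v, w}` is a triangle of the triangulated product whose diagonal edge
does not contain the vertex `x`. -/
def IsFaceAvoiding (T : TriProd G H) (u v w x : VG × VH) : Prop :=
  ∃ a a' b b', T.diag (a, b) (a', b') ∧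
    ({u, v, w} : Finset (VG × VH)) = {(a, b), (a', b'), (a', b)} ∧
    x ≠ (a, b) ∧ x ≠ (a', b')

variable [Fintype VG] [Fintype VH]

/-- The structure constant `α(e, x)` for the edge `e = {u, v}` of the
triangulated product and the vertex `x`. -/
noncomputable def alpha (T : TriProd G H) (u v x : VG × VH) : ℤ :=
  if x = u ∨ x = v then
    (if T.diag u v then 1
     else ((Finset.univ.filter (fun w => T.IsFaceAvoiding u v w x)).card : ℤ))
  else 0

/-- The divisor of the function `φ`, evaluated at the edge `{u, v}` of the
triangulated product: the sum of `φ` over the third vertices of the triangles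
containing `{u, v}`, minus `α({u,v},u) φ(u) + α({u,v},v) φ(v)`. -/
noncomputable def Div (T : TriProd G H) (φ : VG × VH → ℤ) (u v : VG × VH) : ℤ :=
  (∑ w ∈ Finset.univ.filter (fun w => T.IsFace u v w), φ w)
    - (T.alpha u v u * φ u + T.alpha u v v * φ v)

/-- A divisor on the triangulated product (a function on edges, encoded as a
function on ordered pairs of vertices) is principal if it agrees with `Div φ`
on every edge, for some `φ`. -/
def Principal (T : TriProd G H) (D : VG × VH → VG × VH → ℤ) : Prop :=
  ∃ φ : VG × VH → ℤ, ∀ u v, T.Adj u v → D u v = T.Div φ u v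

/-- A divisor on the triangulated product is Cartier if near every vertex `x`
it agrees with a principal divisor on all edges containing `x`. -/
def Cartier (T : TriProd G H) (D : VG × VH → VG × VH → ℤ) : Prop :=
  ∀ x : VG × VH, ∃ φ : VG × VH → ℤ,
    ∀ u v, T.Adj u v → (x = u ∨ x = v) → D u v = T.Div φ u v

/-- A divisor is ℚ-Cartier if some nonzero integer multiple of it is Cartier. -/
def QCartier (T : TriProd G H) (D : VG × VH → VG × VH → ℤ) : Prop :=
  ∃ m : ℤ, m ≠ 0 ∧ T.Cartier (fun u v => m * D u v)

/-- The balancing conditions for a divisor `D` on the triangulated product. -/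
def Balanced (T : TriProd G H) (D : VG × VH → VG × VH → ℤ) : Prop :=
  ∀ a : VG, ∀ b : VH,
    (∀ x x' : VG, G.Adj a x → G.Adj a x' →
      (∑ c ∈ Finset.univ.filter (fun c : VH => T.Adj (a, b) (x, c)), D (a, b) (x, c)) =
      (∑ c ∈ Finset.univ.filter (fun c : VH => T.Adj (a, b) (x', c)), D (a, b) (x', c))) ∧
    (∀ y y' : VH, H.Adj b y → H.Adj b y' →
      (∑ c ∈ Finset.univ.filter (fun c : VG => T.Adj (a, b) (c, y)), D (a, b) (c, y)) =
      (∑ c ∈ Finset.univ.filter (fun c : VG => T.Adj (a, b) (c, y')), D (a, b) (c, y')))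

end TriProd

/-- The map `β` sending a pair of divisors on `G` and `H` to a divisor on the
triangulated product: `C(a)` on vertical edges `{(a,b),(a,b')}`, `D(b)` on
horizontal edges `{(a,b),(a',b)}`, and `0` on diagonal edges. -/
noncomputable def beta (C : VG → ℤ) (D : VH → ℤ) (u v : VG × VH) : ℤ :=
  if u.1 = v.1 then C u.1 else if u.2 = v.2 then D u.2 else 0

end TriangulatedProduct
section AuxLemmas

open scoped Classical
open Finset

variable {VG VH : Type*} {G : SimpleGraph VG} {H : SimpleGraph VH}

namespace TriProd

/-- Characterization of the triangles containing a horizontal edge. -/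
lemma horiz_char (T : TriProd G H) (a a' : VG) (b : VH) (hadj : G.Adj a a')
    (P : VG × VH → VG × VH → Prop) (w : VG × VH) :
    (∃ a₁ a₁' b₁ b₁', T.diag (a₁, b₁) (a₁', b₁') ∧
        ({((a, b) : VG × VH), (a', b), w} : Finset (VG × VH))
          = {(a₁, b₁), (a₁', b₁'), (a₁', b₁)} ∧
        P (a₁, b₁) (a₁', b₁')) ↔
    ∃ b', H.Adj b b' ∧
      ((T.diag (a, b) (a', b') ∧ w = (a', b') ∧ P (a, b) (a', b')) ∨
       (T.diag (a, b') (a', b) ∧ w = (a, b') ∧ P (a', b) (a, b'))) := by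
  constructor
  · rintro ⟨a₁, a₁', b₁, b₁', hd, hset, hP⟩
    have hGne : a ≠ a' := hadj.ne
    obtain ⟨hG1, hH1⟩ := T.diag_adj _ _ _ _ hd
    have ha1 : a₁ ≠ a₁' := hG1.ne
    have hb1 : b₁ ≠ b₁' := hH1.ne
    have hmem := Finset.ext_iff.mp hset
    have h1 := (hmem (a, b)).1 (by simp)
    have h2 := (hmem (a', b)).1 (by simp)
    simp only [Finset.mem_insert, Finset.mem_singleton, Prod.mk.injEq] at h1 h2
    rcases h1 with ⟨h1a, h1b⟩ | ⟨h1a, h1b⟩ | ⟨h1a, h1b⟩ <;>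
      rcases h2 with ⟨h2a, h2b⟩ | ⟨h2a, h2b⟩ | ⟨h2a, h2b⟩
    · exact absurd (h1a.trans h2a.symm) hGne
    · exact absurd (h1b.symm.trans h2b) hb1
    · -- survivor A : a = a₁, b = b₁, a' = a₁'
      subst h1a; subst h1b; subst h2a
      have h3 := (hmem (a', b₁')).2 (by simp)
      simp only [Finset.mem_insert, Finset.mem_singleton] at h3
      rcases h3 with h3 | h3 | h3
      · exact absurd (congrArg Prod.fst h3) hGne.symm
      · exact absurd (congrArg Prod.snd h3) hb1.symm
      · exact ⟨b₁', hH1, Or.inl ⟨hd, h3.symm, hP⟩⟩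
    · exact absurd (h1b.symm.trans h2b) hb1.symm
    · exact absurd (h1a.trans h2a.symm) hGne
    · exact absurd (h1a.trans h2a.symm) hGne
    · -- survivor B : a = a₁', b = b₁, a' = a₁
      subst h1a; subst h1b; subst h2a
      have h3 := (hmem (a, b₁')).2 (by simp)
      simp only [Finset.mem_insert, Finset.mem_singleton] at h3
      rcases h3 with h3 | h3 | h3
      · exact absurd (congrArg Prod.snd h3) hb1.symm
      · exact absurd (congrArg Prod.fst h3) hGne
      · exact ⟨b₁', hH1, Or.inr ⟨T.diag_symm _ _ hd, h3.symm, hP⟩⟩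
    · exact absurd (h1b.symm.trans h2b) hb1
    · exact absurd (h1a.trans h2a.symm) hGne
  · rintro ⟨b', hb', ⟨hd, rfl, hP⟩ | ⟨hd, rfl, hP⟩⟩
    · refine ⟨a, a', b, b', hd, ?_, hP⟩
      ext z; simp only [Finset.mem_insert, Finset.mem_singleton]; tauto
    · refine ⟨a', a, b, b', T.diag_symm _ _ hd, ?_, hP⟩
      ext z; simp only [Finset.mem_insert, Finset.mem_singleton]; tauto

end TriProd

end AuxLemmas
section AuxLemmas2

open scoped Classical
open Finset

variable {VG VH : Type*} {G : SimpleGraph VG} {H : SimpleGraph VH}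

namespace TriProd

/-- Characterization of the triangles containing a vertical edge. -/
lemma vert_char (T : TriProd G H) (a : VG) (b b' : VH) (hadj : H.Adj b b')
    (P : VG × VH → VG × VH → Prop) (w : VG × VH) :
    (∃ a₁ a₁' b₁ b₁', T.diag (a₁, b₁) (a₁', b₁') ∧
        ({((a, b) : VG × VH), (a, b'), w} : Finset (VG × VH))
          = {(a₁, b₁), (a₁', b₁'), (a₁', b₁)} ∧
        P (a₁, b₁) (a₁', b₁')) ↔
    ∃ a', G.Adj a a' ∧
      ((T.diag (a, b) (a', b') ∧ w = (a', b') ∧ P (a', b') (a, b)) ∨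
       (T.diag (a, b') (a', b) ∧ w = (a', b) ∧ P (a', b) (a, b'))) := by
  constructor
  · rintro ⟨a₁, a₁', b₁, b₁', hd, hset, hP⟩
    have hHne : b ≠ b' := hadj.ne
    obtain ⟨hG1, hH1⟩ := T.diag_adj _ _ _ _ hd
    have ha1 : a₁ ≠ a₁' := hG1.ne
    have hb1 : b₁ ≠ b₁' := hH1.ne
    have hmem := Finset.ext_iff.mp hset
    have h1 := (hmem (a, b)).1 (by simp)
    have h2 := (hmem (a, b')).1 (by simp)
    simp only [Finset.mem_insert, Finset.mem_singleton, Prod.mk.injEq] at h1 h2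
    rcases h1 with ⟨h1a, h1b⟩ | ⟨h1a, h1b⟩ | ⟨h1a, h1b⟩ <;>
      rcases h2 with ⟨h2a, h2b⟩ | ⟨h2a, h2b⟩ | ⟨h2a, h2b⟩
    · exact absurd (h1b.trans h2b.symm) hHne
    · exact absurd (h1a.symm.trans h2a) ha1
    · exact absurd (h1a.symm.trans h2a) ha1
    · exact absurd (h2a.symm.trans h1a) ha1
    · exact absurd (h1b.trans h2b.symm) hHne
    · -- survivor : a = a₁', b = b₁', b' = b₁
      subst h1a; subst h1b; subst h2b
      have h3 := (hmem (a₁, b')).2 (by simp)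
      simp only [Finset.mem_insert, Finset.mem_singleton] at h3
      rcases h3 with h3 | h3 | h3
      · exact absurd (congrArg Prod.fst h3) ha1
      · exact absurd (congrArg Prod.fst h3) ha1
      · exact ⟨a₁, hG1.symm, Or.inl ⟨T.diag_symm _ _ hd, h3.symm, hP⟩⟩
    · exact absurd (h2a.symm.trans h1a) ha1
    · -- survivor : a = a₁', b = b₁, b' = b₁'
      subst h1a; subst h1b; subst h2b
      have h3 := (hmem (a₁, b)).2 (by simp)
      simp only [Finset.mem_insert, Finset.mem_singleton] at h3
      rcases h3 with h3 | h3 | h3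
      · exact absurd (congrArg Prod.fst h3) ha1
      · exact absurd (congrArg Prod.fst h3) ha1
      · exact ⟨a₁, hG1.symm, Or.inr ⟨T.diag_symm _ _ hd, h3.symm, hP⟩⟩
    · exact absurd (h1b.trans h2b.symm) hHne
  · rintro ⟨a', ha', ⟨hd, rfl, hP⟩ | ⟨hd, rfl, hP⟩⟩
    · refine ⟨a', a, b', b, T.diag_symm _ _ hd, ?_, hP⟩
      ext z; simp only [Finset.mem_insert, Finset.mem_singleton]; tauto
    · refine ⟨a', a, b, b', T.diag_symm _ _ hd, ?_, hP⟩
      ext z; simp only [Finset.mem_insert, Finset.mem_singleton]; tauto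

/-- Characterization of the triangles containing a diagonal edge. -/
lemma diagEdge_char (T : TriProd G H) (a a' : VG) (b b' : VH)
    (hd : T.diag (a, b) (a', b'))
    (P : VG × VH → VG × VH → Prop) (w : VG × VH) :
    (∃ a₁ a₁' b₁ b₁', T.diag (a₁, b₁) (a₁', b₁') ∧
        ({((a, b) : VG × VH), (a', b'), w} : Finset (VG × VH))
          = {(a₁, b₁), (a₁', b₁'), (a₁', b₁)} ∧
        P (a₁, b₁) (a₁', b₁')) ↔
    ((w = (a', b) ∧ P (a, b) (a', b')) ∨ (w = (a, b') ∧ P (a', b') (a, b))) := by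
  have hGne : a ≠ a' := (T.diag_adj _ _ _ _ hd).1.ne
  have hHne : b ≠ b' := (T.diag_adj _ _ _ _ hd).2.ne
  constructor
  · rintro ⟨a₁, a₁', b₁, b₁', hd1, hset, hP⟩
    obtain ⟨hG1, hH1⟩ := T.diag_adj _ _ _ _ hd1
    have ha1 : a₁ ≠ a₁' := hG1.ne
    have hb1 : b₁ ≠ b₁' := hH1.ne
    have hmem := Finset.ext_iff.mp hset
    have h1 := (hmem (a, b)).1 (by simp)
    have h2 := (hmem (a', b')).1 (by simp)
    simp only [Finset.mem_insert, Finset.mem_singleton, Prod.mk.injEq] at h1 h2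
    rcases h1 with ⟨h1a, h1b⟩ | ⟨h1a, h1b⟩ | ⟨h1a, h1b⟩ <;>
      rcases h2 with ⟨h2a, h2b⟩ | ⟨h2a, h2b⟩ | ⟨h2a, h2b⟩ <;>
      [skip; skip; skip; skip; skip; skip; skip; skip; skip]
    all_goals try exact absurd (h1a.trans h2a.symm) hGne
    all_goals try exact absurd (h1b.trans h2b.symm) hHne
    · -- survivor A : a = a₁, b = b₁, a' = a₁', b' = b₁'
      subst h1a; subst h1b; subst h2a; subst h2b
      have h3 := (hmem (a', b)).2 (by simp)
      simp only [Finset.mem_insert, Finset.mem_singleton] at h3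
      rcases h3 with h3 | h3 | h3
      · exact absurd (congrArg Prod.fst h3) hGne.symm
      · exact absurd (congrArg Prod.snd h3) hHne
      · exact Or.inl ⟨h3.symm, hP⟩
    · -- survivor B : a = a₁', b = b₁', a' = a₁, b' = b₁
      subst h1a; subst h1b; subst h2a; subst h2b
      have h3 := (hmem (a, b')).2 (by simp)
      simp only [Finset.mem_insert, Finset.mem_singleton] at h3
      rcases h3 with h3 | h3 | h3
      · exact absurd (congrArg Prod.snd h3) hHne.symm
      · exact absurd (congrArg Prod.fst h3) hGne
      · exact Or.inr ⟨h3.symm, hP⟩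
  · rintro (⟨rfl, hP⟩ | ⟨rfl, hP⟩)
    · exact ⟨a, a', b, b', hd, rfl, hP⟩
    · refine ⟨a', a, b', b, T.diag_symm _ _ hd, ?_, hP⟩
      ext z; simp only [Finset.mem_insert, Finset.mem_singleton]; tauto

end TriProd

end AuxLemmas2
section AuxLemmas3

open scoped Classical
open Finset

variable {VG VH : Type*} {G : SimpleGraph VG} {H : SimpleGraph VH}

namespace TriProd

lemma diag_alt (T : TriProd G H) {a a' : VG} {b b' : VH} (hadj : G.Adj a a')
    (hb : H.Adj b b') (hnd : ¬ T.diag (a, b) (a', b')) : T.diag (a, b') (a', b) := by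
  rcases T.diag_choice a a' b b' hadj hb with ⟨h1, _⟩ | ⟨_, h2⟩
  · exact absurd h1 hnd
  · exact h2

lemma not_diag_alt (T : TriProd G H) {a a' : VG} {b b' : VH} (hadj : G.Adj a a')
    (hb : H.Adj b b') (hd : T.diag (a, b') (a', b)) : ¬ T.diag (a, b) (a', b') := by
  rcases T.diag_choice a a' b b' hadj hb with ⟨_, h2⟩ | ⟨h1, _⟩
  · exact absurd hd h2
  · exact h1

lemma isFace_horiz (T : TriProd G H) (a a' : VG) (b : VH) (hadj : G.Adj a a')
    (w : VG × VH) :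
    T.IsFace (a, b) (a', b) w ↔ ∃ b', H.Adj b b' ∧
      ((T.diag (a, b) (a', b') ∧ w = (a', b')) ∨
       (T.diag (a, b') (a', b) ∧ w = (a, b'))) := by
  have h := T.horiz_char a a' b hadj (fun _ _ => True) w
  simp only [and_true] at h
  exact h

lemma isFaceAvoiding_horiz (T : TriProd G H) (a a' : VG) (b : VH) (hadj : G.Adj a a')
    (w x : VG × VH) :
    T.IsFaceAvoiding (a, b) (a', b) w x ↔ ∃ b', H.Adj b b' ∧
      ((T.diag (a, b) (a', b') ∧ w = (a', b') ∧ x ≠ (a, b) ∧ x ≠ (a', b')) ∨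
       (T.diag (a, b') (a', b) ∧ w = (a, b') ∧ x ≠ (a', b) ∧ x ≠ (a, b'))) := by
  have h := T.horiz_char a a' b hadj (fun y z => x ≠ y ∧ x ≠ z) w
  exact h

lemma isFace_vert (T : TriProd G H) (a : VG) (b b' : VH) (hadj : H.Adj b b')
    (w : VG × VH) :
    T.IsFace (a, b) (a, b') w ↔ ∃ a', G.Adj a a' ∧
      ((T.diag (a, b) (a', b') ∧ w = (a', b')) ∨
       (T.diag (a, b') (a', b) ∧ w = (a', b))) := by
  have h := T.vert_char a b b' hadj (fun _ _ => True) w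
  simp only [and_true] at h
  exact h

lemma isFaceAvoiding_vert (T : TriProd G H) (a : VG) (b b' : VH) (hadj : H.Adj b b')
    (w x : VG × VH) :
    T.IsFaceAvoiding (a, b) (a, b') w x ↔ ∃ a', G.Adj a a' ∧
      ((T.diag (a, b) (a', b') ∧ w = (a', b') ∧ x ≠ (a', b') ∧ x ≠ (a, b)) ∨
       (T.diag (a, b') (a', b) ∧ w = (a', b) ∧ x ≠ (a', b) ∧ x ≠ (a, b'))) := by
  have h := T.vert_char a b b' hadj (fun y z => x ≠ y ∧ x ≠ z) w
  exact h

lemma isFace_diagEdge (T : TriProd G H) (a a' : VG) (b b' : VH)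
    (hd : T.diag (a, b) (a', b')) (w : VG × VH) :
    T.IsFace (a, b) (a', b') w ↔ (w = (a', b) ∨ w = (a, b')) := by
  have h := T.diagEdge_char a a' b b' hd (fun _ _ => True) w
  simp only [and_true] at h
  exact h

variable [Fintype VG] [Fintype VH]

lemma faceset_horiz (T : TriProd G H) (a a' : VG) (b : VH) (hadj : G.Adj a a') :
    (Finset.univ.filter fun w => T.IsFace (a, b) (a', b) w)
      = (Finset.univ.filter fun b' => H.Adj b b').image
          (fun b' => if T.diag (a, b) (a', b') then ((a', b') : VG × VH) else (a, b')) := by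
  ext w
  simp only [Finset.mem_filter, Finset.mem_image, Finset.mem_univ, true_and,
    T.isFace_horiz a a' b hadj]
  constructor
  · rintro ⟨b', hb', ⟨hd, rfl⟩ | ⟨hd, rfl⟩⟩
    · exact ⟨b', hb', if_pos hd⟩
    · exact ⟨b', hb', if_neg (T.not_diag_alt hadj hb' hd)⟩
  · rintro ⟨b', hb', rfl⟩
    by_cases hc : T.diag (a, b) (a', b')
    · exact ⟨b', hb', Or.inl ⟨hc, if_pos hc⟩⟩
    · exact ⟨b', hb', Or.inr ⟨T.diag_alt hadj hb' hc, if_neg hc⟩⟩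

lemma faceset_vert (T : TriProd G H) (a : VG) (b b' : VH) (hadj : H.Adj b b') :
    (Finset.univ.filter fun w => T.IsFace (a, b) (a, b') w)
      = (Finset.univ.filter fun a' => G.Adj a a').image
          (fun a' => if T.diag (a, b) (a', b') then ((a', b') : VG × VH) else (a', b)) := by
  ext w
  simp only [Finset.mem_filter, Finset.mem_image, Finset.mem_univ, true_and,
    T.isFace_vert a b b' hadj]
  constructor
  · rintro ⟨a', ha', ⟨hd, rfl⟩ | ⟨hd, rfl⟩⟩
    · exact ⟨a', ha', if_pos hd⟩
    · exact ⟨a', ha', if_neg (T.not_diag_alt ha' hadj hd)⟩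
  · rintro ⟨a', ha', rfl⟩
    by_cases hc : T.diag (a, b) (a', b')
    · exact ⟨a', ha', Or.inl ⟨hc, if_pos hc⟩⟩
    · exact ⟨a', ha', Or.inr ⟨T.diag_alt ha' hadj hc, if_neg hc⟩⟩

lemma alpha_horiz_fst (T : TriProd G H) (a a' : VG) (b : VH) (hadj : G.Adj a a') :
    T.alpha (a, b) (a', b) (a, b)
      = ((((Finset.univ.filter fun b' => H.Adj b b').filter
          fun b' => ¬ T.diag (a, b) (a', b')).card) : ℤ) := by
  have hnd : ¬ T.diag (a, b) (a', b) := fun h => ((T.diag_adj _ _ _ _ h).2).ne rfl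
  unfold TriProd.alpha
  rw [if_pos (Or.inl rfl), if_neg hnd]
  congr 1
  have hset : (Finset.univ.filter fun w => T.IsFaceAvoiding (a, b) (a', b) w (a, b))
      = ((Finset.univ.filter fun b' => H.Adj b b').filter
          fun b' => ¬ T.diag (a, b) (a', b')).image (fun b' => ((a, b') : VG × VH)) := by
    ext w
    simp only [Finset.mem_filter, Finset.mem_image, Finset.mem_univ, true_and,
      T.isFaceAvoiding_horiz a a' b hadj]
    constructor
    · rintro ⟨b', hb', ⟨hd, rfl, hne1, hne2⟩ | ⟨hd, rfl, hne1, hne2⟩⟩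
      · exact absurd rfl hne1
      · exact ⟨b', ⟨hb', T.not_diag_alt hadj hb' hd⟩, rfl⟩
    · rintro ⟨b', ⟨hb', hnd'⟩, rfl⟩
      refine ⟨b', hb', Or.inr ⟨T.diag_alt hadj hb' hnd', rfl, ?_, ?_⟩⟩
      · exact fun h => hadj.ne (congrArg Prod.fst h)
      · exact fun h => hb'.ne (congrArg Prod.snd h)
  rw [hset, Finset.card_image_of_injective _ (fun x y h => congrArg Prod.snd h)]

lemma alpha_horiz_snd (T : TriProd G H) (a a' : VG) (b : VH) (hadj : G.Adj a a') :
    T.alpha (a, b) (a', b) (a', b)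
      = ((((Finset.univ.filter fun b' => H.Adj b b').filter
          fun b' => T.diag (a, b) (a', b')).card) : ℤ) := by
  have hnd : ¬ T.diag (a, b) (a', b) := fun h => ((T.diag_adj _ _ _ _ h).2).ne rfl
  unfold TriProd.alpha
  rw [if_pos (Or.inr rfl), if_neg hnd]
  congr 1
  have hset : (Finset.univ.filter fun w => T.IsFaceAvoiding (a, b) (a', b) w (a', b))
      = ((Finset.univ.filter fun b' => H.Adj b b').filter
          fun b' => T.diag (a, b) (a', b')).image (fun b' => ((a', b') : VG × VH)) := by
    ext w
    simp only [Finset.mem_filter, Finset.mem_image, Finset.mem_univ, true_and,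
      T.isFaceAvoiding_horiz a a' b hadj]
    constructor
    · rintro ⟨b', hb', ⟨hd, rfl, hne1, hne2⟩ | ⟨hd, rfl, hne1, hne2⟩⟩
      · exact ⟨b', ⟨hb', hd⟩, rfl⟩
      · exact absurd rfl hne1
    · rintro ⟨b', ⟨hb', hd⟩, rfl⟩
      refine ⟨b', hb', Or.inl ⟨hd, rfl, ?_, ?_⟩⟩
      · exact fun h => hadj.ne (congrArg Prod.fst h).symm
      · exact fun h => hb'.ne (congrArg Prod.snd h)
  rw [hset, Finset.card_image_of_injective _ (fun x y h => congrArg Prod.snd h)]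

lemma alpha_vert_fst (T : TriProd G H) (a : VG) (b b' : VH) (hadj : H.Adj b b') :
    T.alpha (a, b) (a, b') (a, b)
      = ((((Finset.univ.filter fun a' => G.Adj a a').filter
          fun a' => ¬ T.diag (a, b) (a', b')).card) : ℤ) := by
  have hnd : ¬ T.diag (a, b) (a, b') := fun h => ((T.diag_adj _ _ _ _ h).1).ne rfl
  unfold TriProd.alpha
  rw [if_pos (Or.inl rfl), if_neg hnd]
  congr 1
  have hset : (Finset.univ.filter fun w => T.IsFaceAvoiding (a, b) (a, b') w (a, b))
      = ((Finset.univ.filter fun a' => G.Adj a a').filter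
          fun a' => ¬ T.diag (a, b) (a', b')).image (fun a' => ((a', b) : VG × VH)) := by
    ext w
    simp only [Finset.mem_filter, Finset.mem_image, Finset.mem_univ, true_and,
      T.isFaceAvoiding_vert a b b' hadj]
    constructor
    · rintro ⟨a', ha', ⟨hd, rfl, hne1, hne2⟩ | ⟨hd, rfl, hne1, hne2⟩⟩
      · exact absurd rfl hne2
      · exact ⟨a', ⟨ha', T.not_diag_alt ha' hadj hd⟩, rfl⟩
    · rintro ⟨a', ⟨ha', hnd'⟩, rfl⟩
      refine ⟨a', ha', Or.inr ⟨T.diag_alt ha' hadj hnd', rfl, ?_, ?_⟩⟩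
      · exact fun h => ha'.ne (congrArg Prod.fst h)
      · exact fun h => hadj.ne (congrArg Prod.snd h)
  rw [hset, Finset.card_image_of_injective _ (fun x y h => congrArg Prod.fst h)]

lemma alpha_vert_snd (T : TriProd G H) (a : VG) (b b' : VH) (hadj : H.Adj b b') :
    T.alpha (a, b) (a, b') (a, b')
      = ((((Finset.univ.filter fun a' => G.Adj a a').filter
          fun a' => T.diag (a, b) (a', b')).card) : ℤ) := by
  have hnd : ¬ T.diag (a, b) (a, b') := fun h => ((T.diag_adj _ _ _ _ h).1).ne rfl
  unfold TriProd.alpha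
  rw [if_pos (Or.inr rfl), if_neg hnd]
  congr 1
  have hset : (Finset.univ.filter fun w => T.IsFaceAvoiding (a, b) (a, b') w (a, b'))
      = ((Finset.univ.filter fun a' => G.Adj a a').filter
          fun a' => T.diag (a, b) (a', b')).image (fun a' => ((a', b') : VG × VH)) := by
    ext w
    simp only [Finset.mem_filter, Finset.mem_image, Finset.mem_univ, true_and,
      T.isFaceAvoiding_vert a b b' hadj]
    constructor
    · rintro ⟨a', ha', ⟨hd, rfl, hne1, hne2⟩ | ⟨hd, rfl, hne1, hne2⟩⟩
      · exact ⟨a', ⟨ha', hd⟩, rfl⟩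
      · exact absurd rfl hne2
    · rintro ⟨a', ⟨ha', hd⟩, rfl⟩
      refine ⟨a', ha', Or.inl ⟨hd, rfl, ?_, ?_⟩⟩
      · exact fun h => ha'.ne (congrArg Prod.fst h)
      · exact fun h => hadj.ne (congrArg Prod.snd h).symm
  rw [hset, Finset.card_image_of_injective _ (fun x y h => congrArg Prod.fst h)]

end TriProd

end AuxLemmas3
section AuxLemmas4

open scoped Classical
open Finset

variable {VG VH : Type*} {G : SimpleGraph VG} {H : SimpleGraph VH}

namespace TriProd

variable [Fintype VG] [Fintype VH]

lemma div_horiz (T : TriProd G H) (p : VG → ℤ) (q : VH → ℤ)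
    (φ : VG × VH → ℤ) (hφ : ∀ c d, φ (c, d) = p c + q d)
    (a a' : VG) (b : VH) (hadj : G.Adj a a') :
    T.Div φ (a, b) (a', b)
      = (∑ b' ∈ Finset.univ.filter fun b' => H.Adj b b', q b')
        - ((Finset.univ.filter fun b' => H.Adj b b').card : ℤ) * q b := by
  classical
  set Nb := Finset.univ.filter fun b' => H.Adj b b' with hNb
  set c := fun b' => T.diag (a, b) (a', b') with hc
  have hsum : (∑ w ∈ Finset.univ.filter (fun w => T.IsFace (a, b) (a', b) w), φ w)
      = ∑ b' ∈ Nb, ((if c b' then p a' else p a) + q b') := by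
    have h2 : ∀ z : VH, ((if c z then ((a', z) : VG × VH) else (a, z)).2) = z := by
      intro z
      by_cases hz : c z
      · rw [if_pos hz]
      · rw [if_neg hz]
    have hinj : ∀ x ∈ Nb, ∀ y ∈ Nb,
        (if c x then ((a', x) : VG × VH) else (a, x))
          = (if c y then ((a', y) : VG × VH) else (a, y)) → x = y := by
      intro x _ y _ h
      have := congrArg Prod.snd h
      rwa [h2 x, h2 y] at this
    rw [faceset_horiz T a a' b hadj, Finset.sum_image hinj]
    refine Finset.sum_congr rfl (fun b' _ => ?_)
    by_cases hz : c b'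
    · rw [if_pos hz, if_pos hz, hφ]
    · rw [if_neg hz, if_neg hz, hφ]
  have hsplit : (∑ b' ∈ Nb, ((if c b' then p a' else p a) + q b'))
      = ((Nb.filter fun b' => c b').card : ℤ) * p a'
        + ((Nb.filter fun b' => ¬ c b').card : ℤ) * p a
        + ∑ b' ∈ Nb, q b' := by
    rw [Finset.sum_add_distrib, Finset.sum_ite, Finset.sum_const, Finset.sum_const]
    push_cast [nsmul_eq_mul]
    ring
  have hcard : ((Nb.filter fun b' => c b').card : ℤ)
      + ((Nb.filter fun b' => ¬ c b').card : ℤ) = (Nb.card : ℤ) := by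
    exact_mod_cast Finset.card_filter_add_card_filter_not (s := Nb)
      (p := fun b' => c b')
  unfold TriProd.Div
  rw [hsum, hsplit, alpha_horiz_fst T a a' b hadj, alpha_horiz_snd T a a' b hadj,
    hφ, hφ]
  rw [← hcard]
  ring

lemma div_vert (T : TriProd G H) (p : VG → ℤ) (q : VH → ℤ)
    (φ : VG × VH → ℤ) (hφ : ∀ c d, φ (c, d) = p c + q d)
    (a : VG) (b b' : VH) (hadj : H.Adj b b') :
    T.Div φ (a, b) (a, b')
      = (∑ a' ∈ Finset.univ.filter fun a' => G.Adj a a', p a')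
        - ((Finset.univ.filter fun a' => G.Adj a a').card : ℤ) * p a := by
  classical
  set Na := Finset.univ.filter fun a' => G.Adj a a' with hNa
  set c := fun a' => T.diag (a, b) (a', b') with hc
  have hsum : (∑ w ∈ Finset.univ.filter (fun w => T.IsFace (a, b) (a, b') w), φ w)
      = ∑ a' ∈ Na, (p a' + (if c a' then q b' else q b)) := by
    have h2 : ∀ z : VG, ((if c z then ((z, b') : VG × VH) else (z, b)).1) = z := by
      intro z
      by_cases hz : c z
      · rw [if_pos hz]
      · rw [if_neg hz]
    have hinj : ∀ x ∈ Na, ∀ y ∈ Na,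
        (if c x then ((x, b') : VG × VH) else (x, b))
          = (if c y then ((y, b') : VG × VH) else (y, b)) → x = y := by
      intro x _ y _ h
      have := congrArg Prod.fst h
      rwa [h2 x, h2 y] at this
    rw [faceset_vert T a b b' hadj, Finset.sum_image hinj]
    refine Finset.sum_congr rfl (fun a' _ => ?_)
    by_cases hz : c a'
    · rw [if_pos hz, if_pos hz, hφ]
    · rw [if_neg hz, if_neg hz, hφ]
  have hsplit : (∑ a' ∈ Na, (p a' + (if c a' then q b' else q b)))
      = ((Na.filter fun a' => c a').card : ℤ) * q b'
        + ((Na.filter fun a' => ¬ c a').card : ℤ) * q b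
        + ∑ a' ∈ Na, p a' := by
    rw [Finset.sum_add_distrib, Finset.sum_ite, Finset.sum_const, Finset.sum_const]
    push_cast [nsmul_eq_mul]
    ring
  have hcard : ((Na.filter fun a' => c a').card : ℤ)
      + ((Na.filter fun a' => ¬ c a').card : ℤ) = (Na.card : ℤ) := by
    exact_mod_cast Finset.card_filter_add_card_filter_not (s := Na)
      (p := fun a' => c a')
  unfold TriProd.Div
  rw [hsum, hsplit, alpha_vert_fst T a b b' hadj, alpha_vert_snd T a b b' hadj,
    hφ, hφ]
  rw [← hcard]
  ring

lemma div_diagEdge (T : TriProd G H) (p : VG → ℤ) (q : VH → ℤ)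
    (φ : VG × VH → ℤ) (hφ : ∀ c d, φ (c, d) = p c + q d)
    (a a' : VG) (b b' : VH) (hd : T.diag (a, b) (a', b')) :
    T.Div φ (a, b) (a', b') = 0 := by
  classical
  have hGne : a ≠ a' := (T.diag_adj _ _ _ _ hd).1.ne
  have hset : (Finset.univ.filter fun w => T.IsFace (a, b) (a', b') w)
      = {((a', b) : VG × VH), (a, b')} := by
    ext w
    simp only [Finset.mem_filter, Finset.mem_univ, true_and,
      T.isFace_diagEdge a a' b b' hd, Finset.mem_insert, Finset.mem_singleton]
  have halpha1 : T.alpha (a, b) (a', b') (a, b) = 1 := by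
    unfold TriProd.alpha
    rw [if_pos (Or.inl rfl), if_pos hd]
  have halpha2 : T.alpha (a, b) (a', b') (a', b') = 1 := by
    unfold TriProd.alpha
    rw [if_pos (Or.inr rfl), if_pos hd]
  unfold TriProd.Div
  rw [hset, Finset.sum_pair (fun h => hGne.symm (congrArg Prod.fst h)),
    halpha1, halpha2, hφ, hφ, hφ, hφ]
  ring

end TriProd

/-- In a connected graph with at least one edge, every vertex has a neighbour. -/
lemma exists_adj_of_connected {V : Type*} {G : SimpleGraph V} (hG : G.Connected)
    (hGe : ∃ a a', G.Adj a a') (a₀ : V) : ∃ a', G.Adj a₀ a' := by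
  obtain ⟨a, a', h⟩ := hGe
  obtain ⟨w⟩ := hG.preconnected a₀ a
  cases w with
  | nil => exact ⟨a', h⟩
  | cons h' _ => exact ⟨_, h'⟩

end AuxLemmas4

/-- For every divisor `C` on `G` and every divisor `D` on `H`,
the divisor `β(C, D)` is a Cartier divisor on the triangulated product `Δ`. -/
theorem beta_cartier {VG VH : Type*} [Fintype VG] [Fintype VH]
    (G : SimpleGraph VG) (H : SimpleGraph VH)
    (hG : G.Connected) (hH : H.Connected)
    (hGe : ∃ a a', G.Adj a a') (hHe : ∃ b b', H.Adj b b')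
    (T : TriProd G H)
    (C : VG → ℤ) (D : VH → ℤ) :
    T.Cartier (beta C D) := by
  rintro ⟨a₀, b₀⟩
  obtain ⟨a₁, ha₁⟩ := exists_adj_of_connected hG hGe a₀
  obtain ⟨b₁, hb₁⟩ := exists_adj_of_connected hH hHe b₀
  refine ⟨fun cd => (if cd.1 = a₁ then C a₀ else 0) + (if cd.2 = b₁ then D b₀ else 0), ?_⟩
  rintro ⟨ua, ub⟩ ⟨va, vb⟩ hadj hx
  rcases hadj with ⟨h2, hGadj⟩ | ⟨h1, hHadj⟩ | hd
  · -- horizontal edge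
    have h2' : ub = vb := h2
    subst h2'
    have hb0 : ub = b₀ := by
      rcases hx with h | h
      · exact (congrArg Prod.snd h).symm
      · exact (congrArg Prod.snd h).symm
    subst hb0
    rw [T.div_horiz (fun c => if c = a₁ then C a₀ else 0)
      (fun d => if d = b₁ then D ub else 0) _ (fun c d => rfl) ua va ub hGadj]
    have hbeta : beta C D (ua, ub) (va, ub) = D ub := by
      unfold beta
      simp [hGadj.ne]
    rw [hbeta]
    simp [Finset.sum_ite_eq', Finset.mem_filter, hb₁, hb₁.ne]
  · -- vertical edge
    have h1' : ua = va := h1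
    subst h1'
    have ha0 : ua = a₀ := by
      rcases hx with h | h
      · exact (congrArg Prod.fst h).symm
      · exact (congrArg Prod.fst h).symm
    subst ha0
    rw [T.div_vert (fun c => if c = a₁ then C ua else 0)
      (fun d => if d = b₁ then D b₀ else 0) _ (fun c d => rfl) ua ub vb hHadj]
    have hbeta : beta C D (ua, ub) (ua, vb) = C ua := by
      unfold beta
      simp
    rw [hbeta]
    simp [Finset.sum_ite_eq', Finset.mem_filter, ha₁, ha₁.ne]
  · -- diagonal edge
    rw [T.div_diagEdge (fun c => if c = a₁ then C a₀ else 0)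
      (fun d => if d = b₁ then D b₀ else 0) _ (fun c d => rfl) ua va ub vb hd]
    have hGne : ua ≠ va := (T.diag_adj _ _ _ _ hd).1.ne
    have hHne : ub ≠ vb := (T.diag_adj _ _ _ _ hd).2.ne
    unfold beta
    simp [hGne, hHne]
end

section
/- If H is a tree, then every Cartier divisor on the triangulated product Δ of G and H is linearly equivalent (i.e., differs by a principal divisor on Δ) to a Cartier divisor that vanishes on every diagonal edge of Δ. -/
open scoped Classical
open Finset

/- ======== auxiliary development ======== -/
section CEDF

variable {VG VH : Type*} {G : SimpleGraph VG} {H : SimpleGraph VH}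

private lemma mem3 {α : Type*} [DecidableEq α] {p1 p2 p3 q1 q2 q3 : α}
    (h : ({p1, p2, p3} : Finset α) = {q1, q2, q3}) (hp : p1 ≠ p2)
    (h12 : q1 ≠ q2) (h13 : q1 ≠ q3) (h23 : q2 ≠ q3) :
    (p1 = q1 ∧ p2 = q2 ∧ p3 = q3) ∨ (p1 = q1 ∧ p2 = q3 ∧ p3 = q2) ∨
    (p1 = q2 ∧ p2 = q1 ∧ p3 = q3) ∨ (p1 = q2 ∧ p2 = q3 ∧ p3 = q1) ∨
    (p1 = q3 ∧ p2 = q1 ∧ p3 = q2) ∨ (p1 = q3 ∧ p2 = q2 ∧ p3 = q1) := by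
  have h' := Finset.ext_iff.mp h
  simp only [Finset.mem_insert, Finset.mem_singleton] at h'
  have m1 : p1 = q1 ∨ p1 = q2 ∨ p1 = q3 := (h' p1).mp (by tauto)
  have m2 : p2 = q1 ∨ p2 = q2 ∨ p2 = q3 := (h' p2).mp (by tauto)
  have w1 : q1 = p1 ∨ q1 = p2 ∨ q1 = p3 := (h' q1).mpr (by tauto)
  have w2 : q2 = p1 ∨ q2 = p2 ∨ q2 = p3 := (h' q2).mpr (by tauto)
  have w3 : q3 = p1 ∨ q3 = p2 ∨ q3 = p3 := (h' q3).mpr (by tauto)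
  rcases m1 with e1 | e1 | e1 <;> rcases m2 with e2 | e2 | e2 <;>
    subst e1 <;> subst e2 <;> simp_all <;>
    first
      | tauto
      | (rcases (h' q3).mpr (by tauto) with e | e | e <;> simp_all)

private lemma diag_adj' (T : TriProd G H) {u v : VG × VH} (h : T.diag u v) :
    G.Adj u.1 v.1 ∧ H.Adj u.2 v.2 := T.diag_adj u.1 v.1 u.2 v.2 (by simpa using h)

private lemma diag_iff (T : TriProd G H) (u v : VG × VH) : T.diag u v ↔ T.diag v u :=
  ⟨T.diag_symm u v, T.diag_symm v u⟩

/-- Classification of faces over a diagonal edge. -/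
private lemma isFace_diag_iff (T : TriProd G H) {a x : VG} {b c : VH}
    (hd : T.diag (a, b) (x, c)) (w : VG × VH) :
    T.IsFace (a, b) (x, c) w ↔ w = (x, b) ∨ w = (a, c) := by
  have hax : a ≠ x := (diag_adj' T hd).1.ne
  have hbc : b ≠ c := (diag_adj' T hd).2.ne
  constructor
  · rintro ⟨A, A', B, B', hdg, hset⟩
    have hAA : A ≠ A' := (T.diag_adj _ _ _ _ hdg).1.ne
    have hBB : B ≠ B' := (T.diag_adj _ _ _ _ hdg).2.ne
    have q12 : (A, B) ≠ (A', B') := fun h => hAA (congrArg Prod.fst h)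
    have q13 : (A, B) ≠ (A', B) := fun h => hAA (congrArg Prod.fst h)
    have q23 : (A', B') ≠ (A', B) := fun h => hBB (congrArg Prod.snd h).symm
    have hp : (a, b) ≠ (x, c) := fun h => hax (congrArg Prod.fst h)
    rcases mem3 hset hp q12 q13 q23 with
      ⟨e1, e2, e3⟩ | ⟨e1, e2, e3⟩ | ⟨e1, e2, e3⟩ | ⟨e1, e2, e3⟩ | ⟨e1, e2, e3⟩ | ⟨e1, e2, e3⟩
    · rw [Prod.mk.injEq] at e1 e2
      left; rw [e3, ← e2.1, ← e1.2]
    · exfalso; rw [Prod.mk.injEq] at e1 e2; exact hbc (e1.2.trans e2.2.symm)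
    · rw [Prod.mk.injEq] at e1 e2
      right; rw [e3, ← e1.1, ← e2.2]
    · exfalso; rw [Prod.mk.injEq] at e1 e2; exact hax (e1.1.trans e2.1.symm)
    · exfalso; rw [Prod.mk.injEq] at e1 e2; exact hbc (e1.2.trans e2.2.symm)
    · exfalso; rw [Prod.mk.injEq] at e1 e2; exact hax (e1.1.trans e2.1.symm)
  · rintro (rfl | rfl)
    · exact ⟨a, x, b, c, hd, rfl⟩
    · refine ⟨x, a, c, b, T.diag_symm _ _ hd, ?_⟩
      ext z
      simp only [Finset.mem_insert, Finset.mem_singleton]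
      tauto

/-- Classification of faces over a horizontal edge. -/
private lemma isFace_horiz_iff (T : TriProd G H) {a x : VG} {β : VH}
    (hax : G.Adj a x) (w : VG × VH) :
    T.IsFace (a, β) (x, β) w ↔
      (∃ γ, T.diag (a, β) (x, γ) ∧ w = (x, γ)) ∨
      (∃ γ, T.diag (a, γ) (x, β) ∧ w = (a, γ)) := by
  have haxne : a ≠ x := hax.ne
  constructor
  · rintro ⟨A, A', B, B', hdg, hset⟩
    have hAA : A ≠ A' := (T.diag_adj _ _ _ _ hdg).1.ne
    have hBB : B ≠ B' := (T.diag_adj _ _ _ _ hdg).2.ne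
    have q12 : (A, B) ≠ (A', B') := fun h => hAA (congrArg Prod.fst h)
    have q13 : (A, B) ≠ (A', B) := fun h => hAA (congrArg Prod.fst h)
    have q23 : (A', B') ≠ (A', B) := fun h => hBB (congrArg Prod.snd h).symm
    have hp : (a, β) ≠ (x, β) := fun h => haxne (congrArg Prod.fst h)
    rcases mem3 hset hp q12 q13 q23 with
      ⟨e1, e2, e3⟩ | ⟨e1, e2, e3⟩ | ⟨e1, e2, e3⟩ | ⟨e1, e2, e3⟩ | ⟨e1, e2, e3⟩ | ⟨e1, e2, e3⟩ <;>
      rw [Prod.mk.injEq] at e1 e2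
    · exact absurd (e1.2.symm.trans e2.2) hBB
    · left; refine ⟨B', ?_, ?_⟩
      · rw [← e1.1, ← e1.2, ← e2.1] at hdg; exact hdg
      · rw [e3, ← e2.1]
    · exact absurd (e2.2.symm.trans e1.2) hBB
    · exact absurd (e1.1.trans e2.1.symm) haxne
    · right; refine ⟨B', ?_, ?_⟩
      · exact T.diag_symm _ _ (by rw [← e2.1, ← e2.2, ← e1.1] at hdg; exact hdg)
      · rw [e3, ← e1.1]
    · exact absurd (e1.1.trans e2.1.symm) haxne
  · rintro (⟨γ, hdg, rfl⟩ | ⟨γ, hdg, rfl⟩)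
    · refine ⟨a, x, β, γ, hdg, ?_⟩
      ext z; simp only [Finset.mem_insert, Finset.mem_singleton]; tauto
    · refine ⟨x, a, β, γ, T.diag_symm _ _ hdg, ?_⟩
      ext z; simp only [Finset.mem_insert, Finset.mem_singleton]; tauto

/-- Classification of faces avoiding the left endpoint of a horizontal edge. -/
private lemma isFaceAvoiding_horiz_left (T : TriProd G H) {a x : VG} {β : VH}
    (hax : G.Adj a x) (w : VG × VH) :
    T.IsFaceAvoiding (a, β) (x, β) w (a, β) ↔
      ∃ γ, T.diag (a, γ) (x, β) ∧ w = (a, γ) := by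
  have haxne : a ≠ x := hax.ne
  constructor
  · rintro ⟨A, A', B, B', hdg, hset, hn1, hn2⟩
    have hAA : A ≠ A' := (T.diag_adj _ _ _ _ hdg).1.ne
    have hBB : B ≠ B' := (T.diag_adj _ _ _ _ hdg).2.ne
    have q12 : (A, B) ≠ (A', B') := fun h => hAA (congrArg Prod.fst h)
    have q13 : (A, B) ≠ (A', B) := fun h => hAA (congrArg Prod.fst h)
    have q23 : (A', B') ≠ (A', B) := fun h => hBB (congrArg Prod.snd h).symm
    have hp : (a, β) ≠ (x, β) := fun h => haxne (congrArg Prod.fst h)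
    rcases mem3 hset hp q12 q13 q23 with
      ⟨e1, e2, e3⟩ | ⟨e1, e2, e3⟩ | ⟨e1, e2, e3⟩ | ⟨e1, e2, e3⟩ | ⟨e1, e2, e3⟩ | ⟨e1, e2, e3⟩
    · exact absurd e1 hn1
    · exact absurd e1 hn1
    · exact absurd e1 hn2
    · exact absurd e1 hn2
    · rw [Prod.mk.injEq] at e1 e2
      refine ⟨B', ?_, ?_⟩
      · exact T.diag_symm _ _ (by rw [← e2.1, ← e2.2, ← e1.1] at hdg; exact hdg)
      · rw [e3, ← e1.1]
    · rw [Prod.mk.injEq] at e1 e2; exact absurd (e1.1.trans e2.1.symm) haxne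
  · rintro ⟨γ, hdg, rfl⟩
    have hβγ : β ≠ γ := ((T.diag_adj _ _ _ _ hdg).2.ne).symm
    refine ⟨x, a, β, γ, T.diag_symm _ _ hdg, ?_, ?_, ?_⟩
    · ext z; simp only [Finset.mem_insert, Finset.mem_singleton]; tauto
    · exact fun h => haxne (congrArg Prod.fst h)
    · exact fun h => hβγ (congrArg Prod.snd h)

/-- Classification of faces avoiding the right endpoint of a horizontal edge. -/
private lemma isFaceAvoiding_horiz_right (T : TriProd G H) {a x : VG} {β : VH}
    (hax : G.Adj a x) (w : VG × VH) :
    T.IsFaceAvoiding (a, β) (x, β) w (x, β) ↔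
      ∃ γ, T.diag (a, β) (x, γ) ∧ w = (x, γ) := by
  have haxne : a ≠ x := hax.ne
  constructor
  · rintro ⟨A, A', B, B', hdg, hset, hn1, hn2⟩
    have hAA : A ≠ A' := (T.diag_adj _ _ _ _ hdg).1.ne
    have hBB : B ≠ B' := (T.diag_adj _ _ _ _ hdg).2.ne
    have q12 : (A, B) ≠ (A', B') := fun h => hAA (congrArg Prod.fst h)
    have q13 : (A, B) ≠ (A', B) := fun h => hAA (congrArg Prod.fst h)
    have q23 : (A', B') ≠ (A', B) := fun h => hBB (congrArg Prod.snd h).symm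
    have hp : (a, β) ≠ (x, β) := fun h => haxne (congrArg Prod.fst h)
    rcases mem3 hset hp q12 q13 q23 with
      ⟨e1, e2, e3⟩ | ⟨e1, e2, e3⟩ | ⟨e1, e2, e3⟩ | ⟨e1, e2, e3⟩ | ⟨e1, e2, e3⟩ | ⟨e1, e2, e3⟩
    · exact absurd e2 hn2
    · rw [Prod.mk.injEq] at e1 e2
      refine ⟨B', ?_, ?_⟩
      · rw [← e1.1, ← e1.2, ← e2.1] at hdg; exact hdg
      · rw [e3, ← e2.1]
    · exact absurd e2 hn1
    · rw [Prod.mk.injEq] at e1 e2; exact absurd (e1.1.trans e2.1.symm) haxne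
    · exact absurd e2 hn1
    · exact absurd e2 hn2
  · rintro ⟨γ, hdg, rfl⟩
    have hβγ : β ≠ γ := (T.diag_adj _ _ _ _ hdg).2.ne
    refine ⟨a, x, β, γ, hdg, ?_, ?_, ?_⟩
    · ext z; simp only [Finset.mem_insert, Finset.mem_singleton]; tauto
    · exact fun h => haxne.symm (congrArg Prod.fst h)
    · exact fun h => hβγ (congrArg Prod.snd h)

variable [Fintype VG] [Fintype VH]

private lemma div_diag (T : TriProd G H) (φ : VG × VH → ℤ) {a x : VG} {b c : VH}
    (hd : T.diag (a, b) (x, c)) :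
    T.Div φ (a, b) (x, c) = φ (x, b) + φ (a, c) - φ (a, b) - φ (x, c) := by
  have hax : a ≠ x := (diag_adj' T hd).1.ne
  have hfil : Finset.univ.filter (fun w => T.IsFace (a, b) (x, c) w) =
      ({(x, b), (a, c)} : Finset (VG × VH)) := by
    ext w
    simp only [Finset.mem_filter, Finset.mem_univ, true_and, Finset.mem_insert,
      Finset.mem_singleton, isFace_diag_iff T hd]
  have hne : ((x, b) : VG × VH) ≠ (a, c) := fun h => hax ((congrArg Prod.fst h)).symm
  have ha1 : T.alpha (a, b) (x, c) (a, b) = 1 := by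
    rw [TriProd.alpha, if_pos (Or.inl rfl), if_pos hd]
  have ha2 : T.alpha (a, b) (x, c) (x, c) = 1 := by
    rw [TriProd.alpha, if_pos (Or.inr rfl), if_pos hd]
  rw [TriProd.Div, hfil, Finset.sum_pair hne, ha1, ha2]
  ring

private lemma alpha_horiz_left (T : TriProd G H) {a x : VG} {β : VH} (hax : G.Adj a x) :
    T.alpha (a, β) (x, β) (a, β) =
      ((Finset.univ.filter (fun γ => T.diag (a, γ) (x, β))).card : ℤ) := by
  have hnd : ¬ T.diag (a, β) (x, β) := fun h => H.irrefl (diag_adj' T h).2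
  rw [TriProd.alpha, if_pos (Or.inl rfl), if_neg hnd]
  congr 1
  have : Finset.univ.filter (fun w => T.IsFaceAvoiding (a, β) (x, β) w (a, β)) =
      (Finset.univ.filter (fun γ => T.diag (a, γ) (x, β))).image (fun γ => ((a, γ) : VG × VH)) := by
    ext w
    simp only [Finset.mem_filter, Finset.mem_univ, true_and, Finset.mem_image,
      isFaceAvoiding_horiz_left T hax]
    constructor
    · rintro ⟨γ, h1, rfl⟩; exact ⟨γ, h1, rfl⟩
    · rintro ⟨γ, h1, rfl⟩; exact ⟨γ, h1, rfl⟩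
  rw [this, Finset.card_image_of_injective _ (fun γ γ' h => (Prod.mk.injEq _ _ _ _).mp h |>.2)]

private lemma alpha_horiz_right (T : TriProd G H) {a x : VG} {β : VH} (hax : G.Adj a x) :
    T.alpha (a, β) (x, β) (x, β) =
      ((Finset.univ.filter (fun γ => T.diag (a, β) (x, γ))).card : ℤ) := by
  have hnd : ¬ T.diag (a, β) (x, β) := fun h => H.irrefl (diag_adj' T h).2
  rw [TriProd.alpha, if_pos (Or.inr rfl), if_neg hnd]
  congr 1
  have : Finset.univ.filter (fun w => T.IsFaceAvoiding (a, β) (x, β) w (x, β)) =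
      (Finset.univ.filter (fun γ => T.diag (a, β) (x, γ))).image (fun γ => ((x, γ) : VG × VH)) := by
    ext w
    simp only [Finset.mem_filter, Finset.mem_univ, true_and, Finset.mem_image,
      isFaceAvoiding_horiz_right T hax]
    constructor
    · rintro ⟨γ, h1, rfl⟩; exact ⟨γ, h1, rfl⟩
    · rintro ⟨γ, h1, rfl⟩; exact ⟨γ, h1, rfl⟩
  rw [this, Finset.card_image_of_injective _ (fun γ γ' h => (Prod.mk.injEq _ _ _ _).mp h |>.2)]

private lemma div_horiz (T : TriProd G H) (φ : VG × VH → ℤ) {a x : VG} {β : VH}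
    (hax : G.Adj a x) :
    T.Div φ (a, β) (x, β) =
      (∑ γ ∈ Finset.univ.filter (fun γ => T.diag (a, β) (x, γ)), φ (x, γ))
      + (∑ γ ∈ Finset.univ.filter (fun γ => T.diag (a, γ) (x, β)), φ (a, γ))
      - ((Finset.univ.filter (fun γ => T.diag (a, γ) (x, β))).card : ℤ) * φ (a, β)
      - ((Finset.univ.filter (fun γ => T.diag (a, β) (x, γ))).card : ℤ) * φ (x, β) := by
  have hfil : Finset.univ.filter (fun w => T.IsFace (a, β) (x, β) w) =
      ((Finset.univ.filter (fun γ => T.diag (a, β) (x, γ))).image (fun γ => ((x, γ) : VG × VH)))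
      ∪ ((Finset.univ.filter (fun γ => T.diag (a, γ) (x, β))).image (fun γ => ((a, γ) : VG × VH))) := by
    ext w
    simp only [Finset.mem_filter, Finset.mem_univ, true_and, Finset.mem_union, Finset.mem_image,
      isFace_horiz_iff T hax]
    constructor
    · rintro (⟨γ, h1, rfl⟩ | ⟨γ, h1, rfl⟩)
      · exact Or.inl ⟨γ, h1, rfl⟩
      · exact Or.inr ⟨γ, h1, rfl⟩
    · rintro (⟨γ, h1, rfl⟩ | ⟨γ, h1, rfl⟩)
      · exact Or.inl ⟨γ, h1, rfl⟩
      · exact Or.inr ⟨γ, h1, rfl⟩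
  have hdisj : Disjoint
      ((Finset.univ.filter (fun γ => T.diag (a, β) (x, γ))).image (fun γ => ((x, γ) : VG × VH)))
      ((Finset.univ.filter (fun γ => T.diag (a, γ) (x, β))).image (fun γ => ((a, γ) : VG × VH))) := by
    rw [Finset.disjoint_left]
    rintro w hw1 hw2
    simp only [Finset.mem_image, Finset.mem_filter] at hw1 hw2
    obtain ⟨γ, _, rfl⟩ := hw1
    obtain ⟨γ', _, h⟩ := hw2
    exact hax.ne (congrArg Prod.fst h)
  rw [TriProd.Div, hfil, Finset.sum_union hdisj,
    Finset.sum_image (fun γ _ γ' _ h => (Prod.mk.injEq _ _ _ _).mp h |>.2),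
    Finset.sum_image (fun γ _ γ' _ h => (Prod.mk.injEq _ _ _ _).mp h |>.2),
    alpha_horiz_left T hax, alpha_horiz_right T hax]
  ring

/-- Decomposition of the set of edges from `(a,β)` into column `x`. -/
private lemma adj_col_filter (T : TriProd G H) {a x : VG} (β : VH) (hax : G.Adj a x) :
    Finset.univ.filter (fun c => T.Adj (a, β) (x, c)) =
      insert β (Finset.univ.filter (fun c => T.diag (a, β) (x, c))) := by
  ext c
  simp only [Finset.mem_filter, Finset.mem_univ, true_and, Finset.mem_insert]
  simp only [TriProd.Adj]
  constructor
  · rintro (⟨h1, _⟩ | ⟨h1, _⟩ | h)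
    · exact Or.inl h1.symm
    · exact absurd h1 hax.ne
    · exact Or.inr h
  · rintro (rfl | h)
    · exact Or.inl ⟨rfl, hax⟩
    · exact Or.inr (Or.inr h)

private lemma beta_not_mem_diagfilter (T : TriProd G H) {a x : VG} (β : VH) :
    β ∉ Finset.univ.filter (fun c => T.diag (a, β) (x, c)) := by
  simp only [Finset.mem_filter, Finset.mem_univ, true_and]
  exact fun h => H.irrefl (diag_adj' T h).2

/-- Key identity: the sum of `Div φ` over all edges from `(a,β)` into the column of a
`G`-neighbour `x` equals the vertical Laplacian term at `(a,β)`, independent of `x`. -/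
private lemma col_sum_div (T : TriProd G H) (φ : VG × VH → ℤ) {a x : VG} (β : VH)
    (hax : G.Adj a x) :
    (∑ c ∈ Finset.univ.filter (fun c => T.Adj (a, β) (x, c)), T.Div φ (a, β) (x, c)) =
      ∑ γ ∈ Finset.univ.filter (fun γ => H.Adj β γ), (φ (a, γ) - φ (a, β)) := by
  classical
  set Ax := Finset.univ.filter (fun c => T.diag (a, β) (x, c)) with hAx
  set Aa := Finset.univ.filter (fun c => T.diag (a, c) (x, β)) with hAa
  have hsplit : Finset.univ.filter (fun γ => H.Adj β γ) = Aa ∪ Ax := by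
    ext γ
    simp only [hAx, hAa, Finset.mem_union, Finset.mem_filter, Finset.mem_univ, true_and]
    constructor
    · intro h
      rcases T.diag_choice a x β γ hax h with ⟨h1, _⟩ | ⟨_, h2⟩
      · exact Or.inr h1
      · exact Or.inl h2
    · rintro (h | h)
      · exact ((diag_adj' T h).2).symm
      · exact (diag_adj' T h).2
  have hdisj : Disjoint Aa Ax := by
    rw [Finset.disjoint_left]
    intro γ h1 h2
    simp only [hAx, hAa, Finset.mem_filter, Finset.mem_univ, true_and] at h1 h2
    have hβγ : H.Adj β γ := (diag_adj' T h2).2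
    rcases T.diag_choice a x β γ hax hβγ with ⟨_, hn⟩ | ⟨hn, _⟩
    · exact hn h1
    · exact hn h2
  rw [adj_col_filter T β hax, Finset.sum_insert (beta_not_mem_diagfilter T β),
    div_horiz T φ hax, hsplit, Finset.sum_union hdisj]
  have hdiagsum : (∑ c ∈ Ax, T.Div φ (a, β) (x, c)) =
      ∑ c ∈ Ax, (φ (x, β) + φ (a, c) - φ (a, β) - φ (x, c)) := by
    refine Finset.sum_congr rfl (fun c hc => ?_)
    simp only [hAx, Finset.mem_filter, Finset.mem_univ, true_and] at hc
    exact div_diag T φ hc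
  rw [hdiagsum]
  simp only [Finset.sum_sub_distrib, Finset.sum_add_distrib, Finset.sum_const,
    nsmul_eq_mul]
  ring

/-- The τ-sum for a tree edge `(b, b'')`, using local functions `Φ`. -/
noncomputable def tauF (H : SimpleGraph VH) [Fintype VH]
    (Φ : VG × VH → VG × VH → ℤ) (b b'' : VH) (a : VG) : ℤ :=
  ∑ β ∈ Finset.univ.filter
      (fun β => (H \ SimpleGraph.fromEdgeSet {s(b, b'')}).Reachable b β),
    ∑ γ ∈ Finset.univ.filter (fun γ => H.Adj β γ),
      (Φ (a, β) (a, γ) - Φ (a, β) (a, β))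

private lemma tau_col (T : TriProd G H)
    (D : VG × VH → VG × VH → ℤ) (Φ : VG × VH → VG × VH → ℤ)
    (hΦ : ∀ z u v, T.Adj u v → (z = u ∨ z = v) → D u v = T.Div (Φ z) u v)
    {a x : VG} (hax : G.Adj a x) (b b'' : VH) :
    tauF H Φ b b'' a =
      ∑ β ∈ Finset.univ.filter
          (fun β => (H \ SimpleGraph.fromEdgeSet {s(b, b'')}).Reachable b β),
        ∑ c ∈ Finset.univ.filter (fun c => T.Adj (a, β) (x, c)), D (a, β) (x, c) := by
  refine Finset.sum_congr rfl (fun β _ => ?_)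
  rw [← col_sum_div T (Φ (a, β)) β hax]
  refine Finset.sum_congr rfl (fun c hc => ?_)
  simp only [Finset.mem_filter, Finset.mem_univ, true_and] at hc
  exact (hΦ (a, β) (a, β) (x, c) hc (Or.inl rfl)).symm

private lemma tau_diff (T : TriProd G H) (htree : H.IsTree)
    (D : VG × VH → VG × VH → ℤ) (hsymm : ∀ u v, D u v = D v u)
    (Φ : VG × VH → VG × VH → ℤ)
    (hΦ : ∀ z u v, T.Adj u v → (z = u ∨ z = v) → D u v = T.Div (Φ z) u v)
    {a x : VG} {b b'' : VH} (hd : T.diag (a, b) (x, b'')) :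
    tauF H Φ b b'' a - tauF H Φ b b'' x = D (a, b) (x, b'') := by
  classical
  have hax : G.Adj a x := (diag_adj' T hd).1
  have hbb : H.Adj b b'' := (diag_adj' T hd).2
  have hbr : ¬ (H \ SimpleGraph.fromEdgeSet {s(b, b'')}).Reachable b b'' :=
    (SimpleGraph.isBridge_iff.mp
      (SimpleGraph.isAcyclic_iff_forall_adj_isBridge.mp htree.2 hbb))
  set Rdel := H \ SimpleGraph.fromEdgeSet {s(b, b'')} with hRdel
  set Rch : VH → Prop := fun β => Rdel.Reachable b β with hRch
  set P : VH → VH → ℤ := fun β c =>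
    if Rch β ∧ T.diag (a, β) (x, c) then D (a, β) (x, c) else 0 with hP
  set Q : VH → VH → ℤ := fun β c =>
    if Rch c ∧ T.diag (a, β) (x, c) then D (a, β) (x, c) else 0 with hQ
  have hzero : ∀ β c, (β ≠ b ∨ c ≠ b'') → P β c = Q β c := by
    intro β c hne
    by_cases hdg : T.diag (a, β) (x, c)
    · have hβc : H.Adj β c := (diag_adj' T hdg).2
      by_cases he : s(β, c) = s(b, b'')
      · rcases Sym2.eq_iff.mp he with ⟨h1, h2⟩ | ⟨h1, h2⟩
        · rcases hne with h | h
          · exact absurd h1 h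
          · exact absurd h2 h
        · exfalso
          rw [h1, h2] at hdg
          rcases T.diag_choice a x b b'' hax hbb with ⟨_, hn⟩ | ⟨hn, _⟩
          · exact hn hdg
          · exact hn hd
      · have hadj : Rdel.Adj β c := by
          rw [hRdel, SimpleGraph.sdiff_adj]
          exact ⟨hβc, by simp [SimpleGraph.fromEdgeSet_adj, he]⟩
        have hiff : Rch β ↔ Rch c :=
          ⟨fun h => h.trans hadj.reachable, fun h => h.trans hadj.symm.reachable⟩
        simp only [hP, hQ]
        exact if_congr (and_congr hiff Iff.rfl) rfl rfl
    · have hn1 : ¬(Rch β ∧ T.diag (a, β) (x, c)) := fun h => hdg h.2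
      have hn2 : ¬(Rch c ∧ T.diag (a, β) (x, c)) := fun h => hdg h.2
      simp only [hP, hQ, if_neg hn1, if_neg hn2]
  set S := Finset.univ.filter Rch with hS
  have step1 : tauF H Φ b b'' a =
      ∑ β ∈ S, (D (a, β) (x, β) +
        ∑ c ∈ Finset.univ.filter (fun c => T.diag (a, β) (x, c)), D (a, β) (x, c)) := by
    rw [tau_col T D Φ hΦ hax b b'']
    refine Finset.sum_congr rfl (fun β _ => ?_)
    rw [adj_col_filter T β hax, Finset.sum_insert (beta_not_mem_diagfilter T β)]
  have step2 : tauF H Φ b b'' x =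
      ∑ β ∈ S, (D (x, β) (a, β) +
        ∑ c ∈ Finset.univ.filter (fun c => T.diag (x, β) (a, c)), D (x, β) (a, c)) := by
    rw [tau_col T D Φ hΦ hax.symm b b'']
    refine Finset.sum_congr rfl (fun β _ => ?_)
    rw [adj_col_filter T β hax.symm, Finset.sum_insert (beta_not_mem_diagfilter T β)]
  have e1 : (∑ β ∈ S, ∑ c ∈ Finset.univ.filter (fun c => T.diag (a, β) (x, c)),
      D (a, β) (x, c)) = ∑ β ∈ Finset.univ, ∑ c ∈ Finset.univ, P β c := by
    rw [hS, Finset.sum_filter]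
    refine Finset.sum_congr rfl (fun β _ => ?_)
    by_cases hβ : Rch β
    · rw [if_pos hβ, Finset.sum_filter]
      refine Finset.sum_congr rfl (fun c _ => ?_)
      simp only [hP]
      by_cases hdg : T.diag (a, β) (x, c)
      · rw [if_pos hdg, if_pos ⟨hβ, hdg⟩]
      · rw [if_neg hdg, if_neg (fun h => hdg h.2)]
    · rw [if_neg hβ]
      refine (Finset.sum_eq_zero (fun c _ => ?_)).symm
      simp only [hP]
      exact if_neg (fun h => hβ h.1)
  have e2 : (∑ β ∈ S, ∑ c ∈ Finset.univ.filter (fun c => T.diag (x, β) (a, c)),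
      D (x, β) (a, c)) = ∑ β ∈ Finset.univ, ∑ c ∈ Finset.univ, Q β c := by
    have mid : (∑ β ∈ S, ∑ c ∈ Finset.univ.filter (fun c => T.diag (x, β) (a, c)),
        D (x, β) (a, c)) = ∑ β ∈ Finset.univ, ∑ c ∈ Finset.univ,
          (if Rch β ∧ T.diag (x, β) (a, c) then D (x, β) (a, c) else 0) := by
      rw [hS, Finset.sum_filter]
      refine Finset.sum_congr rfl (fun β _ => ?_)
      by_cases hβ : Rch β
      · rw [if_pos hβ, Finset.sum_filter]
        refine Finset.sum_congr rfl (fun c _ => ?_)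
        by_cases hdg : T.diag (x, β) (a, c)
        · rw [if_pos hdg, if_pos ⟨hβ, hdg⟩]
        · rw [if_neg hdg, if_neg (fun h => hdg h.2)]
      · rw [if_neg hβ]
        refine (Finset.sum_eq_zero (fun c _ => ?_)).symm
        exact if_neg (fun h => hβ h.1)
    rw [mid, Finset.sum_comm]
    refine Finset.sum_congr rfl (fun β _ => ?_)
    refine Finset.sum_congr rfl (fun c _ => ?_)
    simp only [hQ]
    refine if_congr (and_congr Iff.rfl (diag_iff T (x, c) (a, β))) (hsymm _ _) rfl
  have main : tauF H Φ b b'' a - tauF H Φ b b'' x =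
      ∑ β ∈ Finset.univ, ∑ c ∈ Finset.univ, (P β c - Q β c) := by
    rw [step1, step2]
    have : (∑ β ∈ S, (D (a, β) (x, β) +
          ∑ c ∈ Finset.univ.filter (fun c => T.diag (a, β) (x, c)), D (a, β) (x, c)))
        - (∑ β ∈ S, (D (x, β) (a, β) +
          ∑ c ∈ Finset.univ.filter (fun c => T.diag (x, β) (a, c)), D (x, β) (a, c)))
        = (∑ β ∈ S, ∑ c ∈ Finset.univ.filter (fun c => T.diag (a, β) (x, c)), D (a, β) (x, c))
        - (∑ β ∈ S, ∑ c ∈ Finset.univ.filter (fun c => T.diag (x, β) (a, c)), D (x, β) (a, c)) := by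
      rw [← Finset.sum_sub_distrib, ← Finset.sum_sub_distrib]
      refine Finset.sum_congr rfl (fun β _ => ?_)
      rw [hsymm (a, β) (x, β)]
      ring
    rw [this, e1, e2, ← Finset.sum_sub_distrib]
    refine Finset.sum_congr rfl (fun β _ => ?_)
    rw [← Finset.sum_sub_distrib]
  rw [main]
  rw [Finset.sum_eq_single_of_mem b (Finset.mem_univ b)
    (fun β _ hβ => Finset.sum_eq_zero (fun c _ => sub_eq_zero_of_eq (hzero β c (Or.inl hβ))))]
  rw [Finset.sum_eq_single_of_mem b'' (Finset.mem_univ b'')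
    (fun c _ hc => sub_eq_zero_of_eq (hzero b c (Or.inr hc)))]
  have hPbb : P b b'' = D (a, b) (x, b'') := by
    simp only [hP]
    exact if_pos ⟨SimpleGraph.Reachable.refl b, hd⟩
  have hQbb : Q b b'' = 0 := by
    simp only [hQ]
    exact if_neg (fun h => hbr h.1)
  rw [hPbb, hQbb, sub_zero]

/-- In a connected graph, after removing one edge, every vertex is still reachable
from one of the two endpoints of that edge. -/
private lemma cover_after_delete (hH : H.Connected) (b b'' : VH) (β : VH) :
    (H \ SimpleGraph.fromEdgeSet {s(b, b'')}).Reachable b β ∨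
    (H \ SimpleGraph.fromEdgeSet {s(b, b'')}).Reachable b'' β := by
  set Rdel := H \ SimpleGraph.fromEdgeSet {s(b, b'')} with hRdel
  have key : ∀ (u v : VH), H.Walk u v →
      (Rdel.Reachable b u ∨ Rdel.Reachable b'' u) →
      (Rdel.Reachable b v ∨ Rdel.Reachable b'' v) := by
    intro u v p
    induction p with
    | nil => exact id
    | @cons u' v' w' h q ih =>
      intro hu
      refine ih ?_
      by_cases he : s(u', v') = s(b, b'')
      · rcases Sym2.eq_iff.mp he with ⟨h1, h2⟩ | ⟨h1, h2⟩
        · rw [h2]; exact Or.inr (SimpleGraph.Reachable.refl _)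
        · rw [h2]; exact Or.inl (SimpleGraph.Reachable.refl _)
      · have hadj : Rdel.Adj u' v' := by
          rw [hRdel, SimpleGraph.sdiff_adj]
          exact ⟨h, by simp [SimpleGraph.fromEdgeSet_adj, he]⟩
        rcases hu with h1 | h1
        · exact Or.inl (h1.trans hadj.reachable)
        · exact Or.inr (h1.trans hadj.reachable)
  obtain ⟨p⟩ := hH.preconnected b β
  exact key b β p (Or.inl (SimpleGraph.Reachable.refl b))

private lemma adj_symm' (T : TriProd G H) {u v : VG × VH} (h : T.Adj u v) : T.Adj v u := by
  rcases h with ⟨h1, h2⟩ | ⟨h1, h2⟩ | h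
  · exact Or.inl ⟨h1.symm, h2.symm⟩
  · exact Or.inr (Or.inl ⟨h1.symm, h2.symm⟩)
  · exact Or.inr (Or.inr (T.diag_symm _ _ h))

private lemma isFace_comm (T : TriProd G H) (u v w : VG × VH) :
    T.IsFace u v w ↔ T.IsFace v u w := by
  unfold TriProd.IsFace
  constructor <;>
    · rintro ⟨A, A', B, B', hdg, hset⟩
      exact ⟨A, A', B, B', hdg, by rw [← hset, Finset.insert_comm]⟩

private lemma isFaceAvoiding_comm (T : TriProd G H) (u v w y : VG × VH) :
    T.IsFaceAvoiding u v w y ↔ T.IsFaceAvoiding v u w y := by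
  unfold TriProd.IsFaceAvoiding
  constructor <;>
    · rintro ⟨A, A', B, B', hdg, hset, hn1, hn2⟩
      exact ⟨A, A', B, B', hdg, by rw [← hset, Finset.insert_comm], hn1, hn2⟩

private lemma alpha_comm (T : TriProd G H) [Fintype VG] [Fintype VH] (u v y : VG × VH) :
    T.alpha u v y = T.alpha v u y := by
  unfold TriProd.alpha
  by_cases hc : y = u ∨ y = v
  · rw [if_pos hc, if_pos hc.symm]
    by_cases hdg : T.diag u v
    · rw [if_pos hdg, if_pos (T.diag_symm _ _ hdg)]
    · rw [if_neg hdg, if_neg (fun h => hdg (T.diag_symm _ _ h))]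
      congr 1
      apply Finset.card_bij (fun w _ => w) <;> intros <;>
        simp_all [isFaceAvoiding_comm T u v]
  · rw [if_neg hc, if_neg (fun h => hc h.symm)]

private lemma div_symm (T : TriProd G H) [Fintype VG] [Fintype VH]
    (φ : VG × VH → ℤ) (u v : VG × VH) : T.Div φ u v = T.Div φ v u := by
  unfold TriProd.Div
  have hfil : Finset.univ.filter (fun w => T.IsFace u v w) =
      Finset.univ.filter (fun w => T.IsFace v u w) := by
    ext w
    simp only [Finset.mem_filter, Finset.mem_univ, true_and]
    exact isFace_comm T u v w
  rw [hfil, alpha_comm T u v u, alpha_comm T u v v]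
  ring

private lemma div_sub (T : TriProd G H) [Fintype VG] [Fintype VH]
    (φ ψ : VG × VH → ℤ) (u v : VG × VH) :
    T.Div (fun z => φ z - ψ z) u v = T.Div φ u v - T.Div ψ u v := by
  unfold TriProd.Div
  rw [Finset.sum_sub_distrib]
  ring

/-- The integrated potential over the tree. -/
noncomputable def gfun (H : SimpleGraph VH) [Fintype VH]
    (Φ : VG × VH → VG × VH → ℤ) (b0 : VH) : VG × VH → ℤ := fun z =>
  ∑ p ∈ (Finset.univ : Finset (VH × VH)),
    if H.Adj p.1 p.2 ∧ (H \ SimpleGraph.fromEdgeSet {s(p.1, p.2)}).Reachable p.1 b0 ∧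
        ¬ (H \ SimpleGraph.fromEdgeSet {s(p.1, p.2)}).Reachable p.1 z.2
    then tauF H Φ p.1 p.2 z.1 else 0

private lemma gdiff [Fintype VH] (hH : H.Connected) (htree : H.IsTree)
    (Φ : VG × VH → VG × VH → ℤ) (b0 : VH)
    {b b'' : VH} (hb : H.Adj b b'') (c : VG) :
    gfun H Φ b0 (c, b) - gfun H Φ b0 (c, b'') =
      if (H \ SimpleGraph.fromEdgeSet {s(b, b'')}).Reachable b b0
      then - tauF H Φ b b'' c else tauF H Φ b'' b c := by
  classical
  have hbr : ¬ (H \ SimpleGraph.fromEdgeSet {s(b, b'')}).Reachable b b'' :=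
    (SimpleGraph.isBridge_iff.mp
      (SimpleGraph.isAcyclic_iff_forall_adj_isBridge.mp htree.2 hb))
  have hsw : (H \ SimpleGraph.fromEdgeSet {s(b'', b)}) =
      (H \ SimpleGraph.fromEdgeSet {s(b, b'')}) := by rw [Sym2.eq_swap]
  set f1 : VH × VH → ℤ := fun p =>
    if H.Adj p.1 p.2 ∧ (H \ SimpleGraph.fromEdgeSet {s(p.1, p.2)}).Reachable p.1 b0 ∧
        ¬ (H \ SimpleGraph.fromEdgeSet {s(p.1, p.2)}).Reachable p.1 b
    then tauF H Φ p.1 p.2 c else 0 with hf1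
  set f2 : VH × VH → ℤ := fun p =>
    if H.Adj p.1 p.2 ∧ (H \ SimpleGraph.fromEdgeSet {s(p.1, p.2)}).Reachable p.1 b0 ∧
        ¬ (H \ SimpleGraph.fromEdgeSet {s(p.1, p.2)}).Reachable p.1 b''
    then tauF H Φ p.1 p.2 c else 0 with hf2
  have hglhs : gfun H Φ b0 (c, b) - gfun H Φ b0 (c, b'') =
      ∑ p ∈ (Finset.univ : Finset (VH × VH)), (f1 p - f2 p) := by
    simp only [gfun]
    rw [Finset.sum_sub_distrib]
  rw [hglhs]
  set t : Finset (VH × VH) := {(b, b''), (b'', b)} with ht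
  have hpair : ((b, b'') : VH × VH) ≠ (b'', b) := fun h => hb.ne (congrArg Prod.fst h)
  have hout : ∀ p ∈ (Finset.univ : Finset (VH × VH)), p ∉ t → f1 p - f2 p = 0 := by
    intro p _ hp
    rw [ht, Finset.mem_insert, Finset.mem_singleton] at hp
    push_neg at hp
    refine sub_eq_zero_of_eq ?_
    by_cases hA : H.Adj p.1 p.2
    · by_cases he : s(p.1, p.2) = s(b, b'')
      · exfalso
        rcases Sym2.eq_iff.mp he with ⟨h1, h2⟩ | ⟨h1, h2⟩
        · exact hp.1 (Prod.ext h1 h2)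
        · exact hp.2 (Prod.ext h1 h2)
      · have hadj : (H \ SimpleGraph.fromEdgeSet {s(p.1, p.2)}).Adj b b'' := by
          rw [SimpleGraph.sdiff_adj]
          refine ⟨hb, ?_⟩
          rw [SimpleGraph.fromEdgeSet_adj]
          rintro ⟨hmem, -⟩
          exact he (Set.mem_singleton_iff.mp hmem).symm
        have hiff : (H \ SimpleGraph.fromEdgeSet {s(p.1, p.2)}).Reachable p.1 b ↔
            (H \ SimpleGraph.fromEdgeSet {s(p.1, p.2)}).Reachable p.1 b'' :=
          ⟨fun h => h.trans hadj.reachable, fun h => h.trans hadj.symm.reachable⟩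
        simp only [hf1, hf2]
        exact if_congr (and_congr Iff.rfl (and_congr Iff.rfl (not_congr hiff))) rfl rfl
    · simp only [hf1, hf2]
      rw [if_neg (fun h => hA h.1), if_neg (fun h => hA h.1)]
  rw [← Finset.sum_subset (Finset.subset_univ t) hout, ht, Finset.sum_pair hpair]
  have v11 : f1 (b, b'') = 0 := by
    simp only [hf1]
    exact if_neg (fun h => h.2.2 (SimpleGraph.Reachable.refl b))
  have v22 : f2 (b'', b) = 0 := by
    simp only [hf2]
    exact if_neg (fun h => h.2.2 (SimpleGraph.Reachable.refl b''))
  have v12 : f2 (b, b'') =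
      if (H \ SimpleGraph.fromEdgeSet {s(b, b'')}).Reachable b b0
      then tauF H Φ b b'' c else 0 := by
    simp only [hf2]
    by_cases h0 : (H \ SimpleGraph.fromEdgeSet {s(b, b'')}).Reachable b b0
    · rw [if_pos h0, if_pos ⟨hb, h0, hbr⟩]
    · rw [if_neg h0, if_neg (fun h => h0 h.2.1)]
  have v21 : f1 (b'', b) =
      if (H \ SimpleGraph.fromEdgeSet {s(b, b'')}).Reachable b'' b0
      then tauF H Φ b'' b c else 0 := by
    simp only [hf1, hsw]
    by_cases h0 : (H \ SimpleGraph.fromEdgeSet {s(b, b'')}).Reachable b'' b0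
    · rw [if_pos h0, if_pos ⟨hb.symm, h0, fun h => hbr h.symm⟩]
    · rw [if_neg h0, if_neg (fun h => h0 h.2.1)]
  rw [v11, v22, v12, v21]
  by_cases h0 : (H \ SimpleGraph.fromEdgeSet {s(b, b'')}).Reachable b b0
  · have h0' : ¬ (H \ SimpleGraph.fromEdgeSet {s(b, b'')}).Reachable b'' b0 :=
      fun h => hbr (h0.trans h.symm)
    rw [if_pos h0, if_pos h0, if_neg h0']
    ring
  · have h0' : (H \ SimpleGraph.fromEdgeSet {s(b, b'')}).Reachable b'' b0 := by
      rcases cover_after_delete hH b b'' b0 with h | h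
      · exact absurd h h0
      · exact h
    rw [if_neg h0, if_neg h0, if_pos h0']
    ring

end CEDF


/-- If `H` is a tree, then every Cartier divisor on the triangulated
product `Δ` of `G` and `H` is linearly equivalent to a Cartier divisor vanishing on
every diagonal edge of `Δ`. -/
theorem cartier_equiv_diag_free {VG VH : Type*} [Fintype VG] [Fintype VH]
    (G : SimpleGraph VG) (H : SimpleGraph VH)
    (hG : G.Connected) (hH : H.Connected)
    (hGe : ∃ a a', G.Adj a a') (hHe : ∃ b b', H.Adj b b')
    (T : TriProd G H)
    (htree : H.IsTree)
    (D : VG × VH → VG × VH → ℤ) (hsymm : ∀ u v, D u v = D v u)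
    (hD : T.Cartier D) :
    ∃ (D' : VG × VH → VG × VH → ℤ) (φ : VG × VH → ℤ),
      (∀ u v, D' u v = D' v u) ∧ T.Cartier D' ∧
      (∀ u v, T.diag u v → D' u v = 0) ∧
      (∀ u v, T.Adj u v → D u v - D' u v = T.Div φ u v) := by
  classical
  obtain ⟨b0, b0', hb0⟩ := hHe
  set Φ : VG × VH → VG × VH → ℤ := fun z => Classical.choose (hD z) with hΦdef
  have hΦ : ∀ z u v, T.Adj u v → (z = u ∨ z = v) → D u v = T.Div (Φ z) u v :=
    fun z => Classical.choose_spec (hD z)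
  set g : VG × VH → ℤ := gfun H Φ b0 with hgdef
  have main : ∀ p q : VG × VH, T.diag p q → T.Div g p q = D p q := by
    rintro ⟨a, b⟩ ⟨x, b''⟩ hd
    have hax : G.Adj a x := (diag_adj' T hd).1
    have hbb : H.Adj b b'' := (diag_adj' T hd).2
    rw [div_diag T g hd]
    have h1 := gdiff hH htree Φ b0 hbb x
    have h2 := gdiff hH htree Φ b0 hbb a
    have hL1 : tauF H Φ b b'' a - tauF H Φ b b'' x = D (a, b) (x, b'') :=
      tau_diff T htree D hsymm Φ hΦ hd
    have hL2 : tauF H Φ b'' b x - tauF H Φ b'' b a = D (x, b'') (a, b) :=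
      tau_diff T htree D hsymm Φ hΦ (T.diag_symm _ _ hd)
    have hDs : D (x, b'') (a, b) = D (a, b) (x, b'') := hsymm _ _
    by_cases h0 : (H \ SimpleGraph.fromEdgeSet {s(b, b'')}).Reachable b b0
    · rw [if_pos h0] at h1 h2
      linarith
    · rw [if_neg h0] at h1 h2
      linarith
  refine ⟨fun u v => if T.Adj u v then D u v - T.Div g u v else 0, g, ?_, ?_, ?_, ?_⟩
  · intro u v
    dsimp only
    by_cases h : T.Adj u v
    · rw [if_pos h, if_pos (adj_symm' T h), hsymm u v, div_symm T g u v]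
    · rw [if_neg h, if_neg (fun h' => h (adj_symm' T h'))]
  · intro z
    refine ⟨fun w => Φ z w - g w, fun u v huv hz => ?_⟩
    dsimp only
    rw [if_pos huv, div_sub T (Φ z) g u v, ← hΦ z u v huv hz]
  · intro u v hd
    dsimp only
    rw [if_pos (show T.Adj u v from Or.inr (Or.inr hd)), main u v hd, sub_self]
  · intro u v huv
    dsimp only
    rw [if_pos huv]
    ring
end
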